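/- Let Φ : ℝᵖ → ℝᵐ be continuously differentiable, let F, F̃ : ℝᵐ → ℝ be analytic on ℝᵐ, and suppose F ∘ Φ = F̃ ∘ Φ on ℝᵖ. If there exists a point w* where the derivative DΦ(w*) is surjective, then F = F̃ on all of ℝᵐ. -/

import Mathlib

open Topology


/-- If `F ∘ Φ = F' ∘ Φ` with `Φ` continuously differentiable and
having a surjective derivative at some point, and `F, F'` analytic on ℝᵐ,
then `F = F'`. -/
theorem stmt_16 (p m : ℕ) (Φ : (Fin p → ℝ) → (Fin m → ℝ))
    (F F' : (Fin m → ℝ) → ℝ)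
    (hΦ : ContDiff ℝ 1 Φ)
    (hF : ∀ x, AnalyticAt ℝ F x) (hF' : ∀ x, AnalyticAt ℝ F' x)
    (heq : ∀ w, F (Φ w) = F' (Φ w))
    (hsurj : ∃ w : Fin p → ℝ, Function.Surjective (fderiv ℝ Φ w)) :
    F = F' := by
  obtain ⟨w, hw⟩ := hsurj
  have hstrict : HasStrictFDerivAt Φ (fderiv ℝ Φ w) w :=
    hΦ.contDiffAt.hasStrictFDerivAt one_ne_zero
  have hmap : Filter.map Φ (𝓝 w) = 𝓝 (Φ w) :=
    hstrict.map_nhds_eq_of_surj (LinearMap.range_eq_top.2 hw)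
  have hev : F =ᶠ[𝓝 (Φ w)] F' := by
    rw [Filter.EventuallyEq, ← hmap]
    exact Filter.eventually_map.2 (Filter.Eventually.of_forall heq)
  exact AnalyticOnNhd.eq_of_eventuallyEq (fun x _ => hF x) (fun x _ => hF' x) hev
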